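/- For every t ≥ 1, every natural number N, and every real x with x ≥ t, the truncated Chebyshev expansion satisfies f_N(x) = I_0(t) + 2·Σ_{n=1}^{N} I_n(t)·T_n(x/t) ≤ e^x. -/

import Mathlib

open Polynomial

/-- The modified Bessel function of the first kind of integer order `n`. -/
noncomputable def besselI (n : ℕ) (t : ℝ) : ℝ :=
  ∑' m : ℕ, (1 / ((m.factorial : ℝ) * ((m + n).factorial : ℝ))) * (t / 2) ^ (2 * m + n)

/-- The degree-`N` Chebyshev truncation of `e^x` on `[-t, t]`. -/
noncomputable def chebTruncExp (t : ℝ) (N : ℕ) (x : ℝ) : ℝ :=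
  besselI 0 t + 2 * ∑ n ∈ Finset.Icc 1 N, besselI n t *
    (Polynomial.Chebyshev.T ℝ (n : ℤ)).eval (x / t)

noncomputable def dterm (t z : ℝ) (p : ℕ × ℕ) : ℝ :=
  (t * z / 2) ^ p.1 / p.1.factorial * ((t / (2 * z)) ^ p.2 / p.2.factorial)

def emb (q : ℤ × ℕ) : ℕ × ℕ := (q.2 + q.1.toNat, q.2 + (-q.1).toNat)

lemma emb_inj : Function.Injective emb := by
  rintro ⟨d, m⟩ ⟨d', m'⟩ h
  simp only [emb, Prod.mk.injEq] at h
  obtain ⟨h1, h2⟩ := h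
  have : d = d' ∧ m = m' := by omega
  simp [this.1, this.2]

lemma sum_Icc_neg (F : ℤ → ℝ) (N : ℕ) :
    ∑ d ∈ Finset.Icc (-(N:ℤ)) (N:ℤ), F d
      = F 0 + ∑ n ∈ Finset.Icc 1 N, (F (n:ℤ) + F (-(n:ℤ))) := by
  induction N with
  | zero => simp
  | succ N ih =>
    have h1 : Finset.Icc (-((N+1:ℕ):ℤ)) ((N+1:ℕ):ℤ)
        = insert (-((N:ℤ)+1)) (insert ((N:ℤ)+1) (Finset.Icc (-(N:ℤ)) (N:ℤ))) := by
      ext d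
      simp only [Finset.mem_Icc, Finset.mem_insert]
      push_cast
      omega
    have h2 : (-((N:ℤ)+1)) ∉ insert ((N:ℤ)+1) (Finset.Icc (-(N:ℤ)) (N:ℤ)) := by
      simp only [Finset.mem_insert, Finset.mem_Icc]; omega
    have h3 : ((N:ℤ)+1) ∉ Finset.Icc (-(N:ℤ)) (N:ℤ) := by
      simp only [Finset.mem_Icc]; omega
    rw [h1, Finset.sum_insert h2, Finset.sum_insert h3, ih,
      Finset.sum_Icc_succ_top (by omega : 1 ≤ N + 1)]
    push_cast
    ring

lemma cheb_eval (z : ℝ) (hz : z ≠ 0) (n : ℕ) :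
    (Polynomial.Chebyshev.T ℝ (n : ℤ)).eval ((z + z⁻¹)/2) = (z ^ n + (z⁻¹) ^ n) / 2 := by
  induction n using Nat.twoStepInduction with
  | zero => simp [Polynomial.Chebyshev.T_zero]
  | one => simp [Polynomial.Chebyshev.T_one]
  | more n ih1 ih2 =>
    have : ((n + 2 : ℕ) : ℤ) = (n : ℤ) + 2 := by push_cast; ring
    rw [this, Polynomial.Chebyshev.T_add_two]
    have hzw : z * z⁻¹ = 1 := mul_inv_cancel₀ hz
    simp only [eval_sub, eval_mul, eval_ofNat, eval_X]
    have e1 : ((n : ℤ) + 1) = ((n + 1 : ℕ) : ℤ) := by push_cast; ring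
    rw [e1, ih2, ih1]
    have h1 : z * z⁻¹ ^ (n + 1) = z⁻¹ ^ n := by
      rw [pow_succ]; field_simp
    have h2 : z⁻¹ * z ^ (n + 1) = z ^ n := by
      rw [pow_succ]; field_simp
    linear_combination (z⁻¹ ^ n + z ^ n) / 2 * hzw

lemma dterm_diag_hi (t z : ℝ) (hz : z ≠ 0) (n m : ℕ) :
    dterm t z (m + n, m)
      = (1 / ((m.factorial : ℝ) * ((m + n).factorial : ℝ))) * (t / 2) ^ (2 * m + n) * z ^ n := by
  have fm : ((m.factorial : ℝ)) ≠ 0 := by exact_mod_cast (Nat.factorial_pos m).ne'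
  have fmn : (((m + n).factorial : ℝ)) ≠ 0 := by exact_mod_cast (Nat.factorial_pos (m + n)).ne'
  simp only [dterm]
  have e1 : (t * z / 2) = (t / 2) * z := by ring
  have e2 : t / (2 * z) = (t / 2) * z⁻¹ := by field_simp
  rw [e1, e2, mul_pow, mul_pow, div_mul_div_comm]
  have key : (t / 2) ^ (m + n) * z ^ (m + n) * ((t / 2) ^ m * z⁻¹ ^ m)
      = (t / 2) ^ (2 * m + n) * z ^ n := by
    have h3 : z ^ (m + n) * (z⁻¹) ^ m = z ^ n := by
      rw [inv_pow, pow_add]; field_simp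
    have h4 : (t / 2) ^ (m + n) * (t / 2) ^ m = (t / 2) ^ (2 * m + n) := by
      rw [← pow_add]; ring_nf
    calc (t / 2) ^ (m + n) * z ^ (m + n) * ((t / 2) ^ m * z⁻¹ ^ m)
        = ((t / 2) ^ (m + n) * (t / 2) ^ m) * (z ^ (m + n) * z⁻¹ ^ m) := by ring
      _ = (t / 2) ^ (2 * m + n) * z ^ n := by rw [h3, h4]
  rw [key]
  field_simp

lemma dterm_diag_lo (t z : ℝ) (hz : z ≠ 0) (n m : ℕ) :
    dterm t z (m, m + n)
      = (1 / ((m.factorial : ℝ) * ((m + n).factorial : ℝ))) * (t / 2) ^ (2 * m + n) * (z⁻¹) ^ n := by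
  have fm : ((m.factorial : ℝ)) ≠ 0 := by exact_mod_cast (Nat.factorial_pos m).ne'
  have fmn : (((m + n).factorial : ℝ)) ≠ 0 := by exact_mod_cast (Nat.factorial_pos (m + n)).ne'
  simp only [dterm]
  have e1 : (t * z / 2) = (t / 2) * z := by ring
  have e2 : t / (2 * z) = (t / 2) * z⁻¹ := by field_simp
  rw [e1, e2, mul_pow, mul_pow, div_mul_div_comm]
  have key : (t / 2) ^ m * z ^ m * ((t / 2) ^ (m + n) * z⁻¹ ^ (m + n))
      = (t / 2) ^ (2 * m + n) * (z⁻¹) ^ n := by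
    have h3 : z ^ m * (z⁻¹) ^ (m + n) = (z⁻¹) ^ n := by
      rw [inv_pow, inv_pow, pow_add]; field_simp
    have h4 : (t / 2) ^ m * (t / 2) ^ (m + n) = (t / 2) ^ (2 * m + n) := by
      rw [← pow_add]; ring_nf
    calc (t / 2) ^ m * z ^ m * ((t / 2) ^ (m + n) * z⁻¹ ^ (m + n))
        = ((t / 2) ^ m * (t / 2) ^ (m + n)) * (z ^ m * z⁻¹ ^ (m + n)) := by ring
      _ = (t / 2) ^ (2 * m + n) * (z⁻¹) ^ n := by rw [h3, h4]
  rw [key]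
  have h5 : (z⁻¹) ^ n = 1 / z ^ n := by rw [inv_pow, one_div]
  rw [h5]
  field_simp

theorem chebTruncExp_le_exp_of_ge (t : ℝ) (ht : 1 ≤ t) (N : ℕ) (x : ℝ) (hx : t ≤ x) :
    chebTruncExp t N x ≤ Real.exp x := by
  have ht0 : 0 < t := by linarith
  set c := x / t with hc_def
  have hc : 1 ≤ c := (one_le_div ht0).mpr hx
  have hx_eq : t * c = x := by rw [hc_def]; field_simp
  set s := Real.sqrt (c ^ 2 - 1) with hs_def
  have hs0 : 0 ≤ s := Real.sqrt_nonneg _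
  have hs2 : s ^ 2 = c ^ 2 - 1 := Real.sq_sqrt (by nlinarith)
  set z := c + s with hz_def
  have hz1 : 1 ≤ z := by linarith
  have hz0 : 0 < z := by linarith
  have hzne : z ≠ 0 := ne_of_gt hz0
  have hzinv : z⁻¹ = c - s := by
    have h1 : z * (c - s) = 1 := by nlinarith [hs2]
    exact (eq_inv_of_mul_eq_one_right h1).symm
  have hzc : (z + z⁻¹) / 2 = c := by rw [hzinv]; ring
  -- nonnegativity
  have hd0 : ∀ p : ℕ × ℕ, 0 ≤ dterm t z p := by
    intro p
    unfold dterm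
    have h1 : 0 ≤ t * z / 2 := by positivity
    have h2 : 0 ≤ t / (2 * z) := by positivity
    positivity
  -- summability
  have hF : Summable (fun a : ℕ => ‖(t * z / 2) ^ a / (a.factorial : ℝ)‖) := by
    refine (Real.summable_pow_div_factorial (|t * z / 2|)).congr fun a => ?_
    simp [Real.norm_eq_abs, abs_div, abs_pow, abs_mul, Nat.abs_cast]
  have hG : Summable (fun a : ℕ => ‖(t / (2 * z)) ^ a / (a.factorial : ℝ)‖) := by
    refine (Real.summable_pow_div_factorial (|t / (2 * z)|)).congr fun a => ?_
    simp [Real.norm_eq_abs, abs_div, abs_pow, abs_mul, Nat.abs_cast]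
  have hsum : Summable (dterm t z) := by
    have := summable_mul_of_summable_norm (R := ℝ) hF hG
    exact this.congr fun p => rfl
  -- total sum is exp x
  have hexp : ∑' p, dterm t z p = Real.exp x := by
    have hprod := tsum_mul_tsum_of_summable_norm (R := ℝ) hF hG
    have hef : ∀ y : ℝ, (∑' a : ℕ, y ^ a / (a.factorial : ℝ)) = Real.exp y := by
      intro y
      rw [Real.exp_eq_exp_ℝ, NormedSpace.exp_eq_tsum_div]
    have harg : t * z / 2 + t / (2 * z) = x := by
      rw [← hx_eq, ← hzc]
      field_simp
    calc ∑' p, dterm t z p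
        = (∑' a : ℕ, (t * z / 2) ^ a / (a.factorial : ℝ)) *
          (∑' b : ℕ, (t / (2 * z)) ^ b / (b.factorial : ℝ)) := (hprod).symm
      _ = Real.exp (t * z / 2) * Real.exp (t / (2 * z)) := by rw [hef, hef]
      _ = Real.exp (t * z / 2 + t / (2 * z)) := (Real.exp_add _ _).symm
      _ = Real.exp x := by rw [harg]
  -- truncated sum as tsum over ℤ × ℕ
  set E := Finset.Icc (-(N:ℤ)) (N:ℤ) with hE_def
  set H : ℤ × ℕ → ℝ := fun q => if q.1 ∈ E then dterm t z (emb q) else 0 with hH_def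
  have hcomp : Summable (fun q : ℤ × ℕ => dterm t z (emb q)) := hsum.comp_injective emb_inj
  have hH0 : ∀ q, 0 ≤ H q := by
    intro q; by_cases h : q.1 ∈ E <;> simp [hH_def, h, hd0]
  have hHle : ∀ q, H q ≤ dterm t z (emb q) := by
    intro q; by_cases h : q.1 ∈ E <;> simp [hH_def, h, hd0]
  have hHs : Summable H := Summable.of_nonneg_of_le hH0 hHle hcomp
  have hle : ∑' q, H q ≤ ∑' p, dterm t z p :=
    Summable.tsum_le_tsum_of_inj emb emb_inj (fun c _ => hd0 c) hHle hHs hsum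
  -- decompose the tsum of H
  have hfiber : ∀ d : ℤ, Summable (fun m : ℕ => H (d, m)) := by
    intro d
    exact hHs.comp_injective (fun a b hab => by simpa using congrArg Prod.snd hab)
  have hdecomp : ∑' q : ℤ × ℕ, H q = ∑ d ∈ E, ∑' m : ℕ, H (d, m) := by
    rw [Summable.tsum_prod' hHs hfiber]
    exact tsum_eq_sum (fun d hd => by simp [hH_def, hd])
  -- identify the diagonal sums
  have ePos : ∀ (n m : ℕ), emb ((n:ℤ), m) = (m + n, m) := by
    intro n m; simp only [emb, Prod.mk.injEq]; constructor <;> omega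
  have eNeg : ∀ (n m : ℕ), emb (-(n:ℤ), m) = (m, m + n) := by
    intro n m; simp only [emb, Prod.mk.injEq]; constructor <;> omega
  have hFpos : ∀ n : ℕ, (n:ℤ) ∈ E → (∑' m : ℕ, H ((n:ℤ), m)) = besselI n t * z ^ n := by
    intro n hn
    have : (∑' m : ℕ, H ((n:ℤ), m))
        = ∑' m : ℕ, (1 / ((m.factorial : ℝ) * ((m + n).factorial : ℝ))) * (t / 2) ^ (2 * m + n) * z ^ n := by
      refine tsum_congr fun m => ?_
      rw [hH_def]
      simp only [hn, if_true]
      rw [ePos n m, dterm_diag_hi t z hzne n m]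
    rw [this, tsum_mul_right]
    rfl
  have hFneg : ∀ n : ℕ, (-(n:ℤ)) ∈ E → (∑' m : ℕ, H (-(n:ℤ), m)) = besselI n t * (z⁻¹) ^ n := by
    intro n hn
    have : (∑' m : ℕ, H (-(n:ℤ), m))
        = ∑' m : ℕ, (1 / ((m.factorial : ℝ) * ((m + n).factorial : ℝ))) * (t / 2) ^ (2 * m + n) * (z⁻¹) ^ n := by
      refine tsum_congr fun m => ?_
      rw [hH_def]
      simp only [hn, if_true]
      rw [eNeg n m, dterm_diag_lo t z hzne n m]
    rw [this, tsum_mul_right]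
    rfl
  -- assemble
  have hmem0 : (0:ℤ) ∈ E := by simp [hE_def]
  have hmemP : ∀ n ∈ Finset.Icc 1 N, (n:ℤ) ∈ E := by
    intro n hn
    simp only [Finset.mem_Icc] at hn
    simp only [hE_def, Finset.mem_Icc]
    omega
  have hmemN : ∀ n ∈ Finset.Icc 1 N, (-(n:ℤ)) ∈ E := by
    intro n hn
    simp only [Finset.mem_Icc] at hn
    simp only [hE_def, Finset.mem_Icc]
    omega
  have hsplit : ∑ d ∈ E, ∑' m : ℕ, H (d, m)
      = (∑' m : ℕ, H ((0:ℤ), m))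
        + ∑ n ∈ Finset.Icc 1 N, ((∑' m : ℕ, H ((n:ℤ), m)) + (∑' m : ℕ, H (-(n:ℤ), m))) := by
    rw [hE_def]
    exact sum_Icc_neg (fun d => ∑' m : ℕ, H (d, m)) N
  have hzero : (∑' m : ℕ, H ((0:ℤ), m)) = besselI 0 t := by
    have := hFpos 0 hmem0
    simpa using this
  have hcheb : chebTruncExp t N x
      = besselI 0 t + ∑ n ∈ Finset.Icc 1 N, besselI n t * (z ^ n + (z⁻¹) ^ n) := by
    unfold chebTruncExp
    rw [Finset.mul_sum]
    congr 1
    refine Finset.sum_congr rfl fun n _ => ?_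
    rw [← hc_def, ← hzc, cheb_eval z hzne n]
    ring
  have hfinal : chebTruncExp t N x = ∑' q : ℤ × ℕ, H q := by
    rw [hdecomp, hsplit, hzero, hcheb]
    congr 1
    refine Finset.sum_congr rfl fun n hn => ?_
    rw [hFpos n (hmemP n hn), hFneg n (hmemN n hn)]
    ring
  rw [hfinal, ← hexp]
  exact hle
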